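/- Let M, K, L be positive integers, h_{l,k} ∈ ℂ^{1×M} row vectors, W_{l,k}, V_{l,k} ∈ ℂ, ξ_{l,k}, ψ_{l,k}, v_k, w, β, E real with E > 0, and p_c, p_1, …, p_K ∈ ℂ^M. Suppose: (i) for every l, k: ψ_{l,k} w · conj(h_{l,k} p_c) = ψ_{l,k} w ( Σ_i |h_{l,k} p_i|² + |h_{l,k} p_c|² + 1 ) W_{l,k}; (ii) for every l, k: ξ_{l,k} v_k · conj(h_{l,k} p_k) = ξ_{l,k} v_k ( Σ_i |h_{l,k} p_i|² + 1 ) V_{l,k}; (iii) for every k: Σ_{l} ξ_{l,k} v_k conj(V_{l,k}) h_{l,k}ᴴ = Σ_{i,l} ξ_{l,i} v_i |V_{l,i}|² h_{l,i}ᴴ h_{l,i} p_k + Σ_{i,l} ψ_{l,i} w |W_{l,i}|² h_{l,i}ᴴ h_{l,i} p_k + β p_k; (iv) Σ_{k,l} ψ_{l,k} w conj(W_{l,k}) h_{l,k}ᴴ = Σ_{k,l} ψ_{l,k} w |W_{l,k}|² h_{l,k}ᴴ h_{l,k} p_c + β p_c; and (v) ‖p_c‖² + Σ_{k} ‖p_k‖²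 = E. Then β = (1/E) Σ_{k=1}^K Σ_{l=1}^L ( ξ_{l,k} v_k |V_{l,k}|² + ψ_{l,k} w |W_{l,k}|² ). -/

import Mathlib

open scoped BigOperators

open scoped BigOperators
lemma mss (z : ℂ) : z * star z = ((‖z‖^2 : ℝ) : ℂ) := by
  rw [Complex.star_def, Complex.mul_conj]
  norm_cast
  rw [Complex.normSq_eq_norm_sq]

lemma swap2 {a c : ℕ} (X : Fin a → Fin c → ℂ) (q : Fin c → ℂ) :
    ∑ j, (∑ l, X l j) * q j = ∑ l, ∑ j, X l j * q j := by
  rw [Finset.sum_comm]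
  exact Finset.sum_congr rfl fun l _ => by rw [Finset.sum_mul]

lemma swap3 {a b c : ℕ} (X : Fin a → Fin b → Fin c → ℂ) (q : Fin c → ℂ) :
    ∑ j, (∑ i, ∑ l, X i l j) * q j = ∑ i, ∑ l, ∑ j, X i l j * q j := by
  rw [swap2 (fun i j => ∑ l, X i l j) q]
  exact Finset.sum_congr rfl fun i _ => swap2 _ q

lemma helperA {L m : ℕ} (a : Fin L → ℂ) (b : Fin L → Fin m → ℂ) (q : Fin m → ℂ) :
    ∑ j, (∑ l, a l * star (b l j)) * star (q j)
      = ∑ l, a l * star (∑ j, b l j * q j) := by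
  rw [swap2 (fun l j => a l * star (b l j))]
  refine Finset.sum_congr rfl fun l _ => ?_
  simp only [star_sum, star_mul', Finset.mul_sum]
  exact Finset.sum_congr rfl fun j _ => by ring

lemma helperA2 {K L m : ℕ} (a : Fin K → Fin L → ℂ) (b : Fin K → Fin L → Fin m → ℂ) (q : Fin m → ℂ) :
    ∑ j, (∑ k, ∑ l, a k l * star (b k l j)) * star (q j)
      = ∑ k, ∑ l, a k l * star (∑ j, b k l j * q j) := by
  rw [swap3 (fun k l j => a k l * star (b k l j))]
  refine Finset.sum_congr rfl fun k _ => Finset.sum_congr rfl fun l _ => ?_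
  simp only [star_sum, star_mul', Finset.mul_sum]
  exact Finset.sum_congr rfl fun j _ => by ring

lemma helperC {K2 L2 m : ℕ} (co : Fin K2 → Fin L2 → ℂ) (b : Fin K2 → Fin L2 → Fin m → ℂ) (q : Fin m → ℂ) :
    ∑ j, (∑ i, ∑ l, co i l * ((∑ m', b i l m' * q m') * star (b i l j))) * star (q j)
      = ∑ i, ∑ l, co i l * ((‖∑ m', b i l m' * q m'‖^2 : ℝ) : ℂ) := by
  rw [swap3 (fun i l j => co i l * ((∑ m', b i l m' * q m') * star (b i l j)))]
  refine Finset.sum_congr rfl fun i _ => Finset.sum_congr rfl fun l _ => ?_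
  calc ∑ j, co i l * ((∑ m', b i l m' * q m') * star (b i l j)) * star (q j)
      = co i l * ((∑ m', b i l m' * q m') * star (∑ j, b i l j * q j)) := by
        simp only [star_sum, star_mul', Finset.mul_sum]
        exact Finset.sum_congr rfl fun j _ => by ring
    _ = _ := by rw [mss]

lemma helperP {m : ℕ} (β : ℂ) (q : Fin m → ℂ) :
    ∑ j, (β * q j) * star (q j) = β * ((∑ j, ‖q j‖^2 : ℝ) : ℂ) := by
  push_cast
  rw [Finset.mul_sum]
  refine Finset.sum_congr rfl fun j _ => ?_
  rw [mul_assoc, mss]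
  push_cast
  ring

/-- Lagrange-multiplier part of Theorem 1 for signal model 2: under the KKT
stationarity conditions for the receivers and all precoders (including the
dedicated common-message precoder `p_c`) and the power constraint met with
equality, the power-constraint multiplier `β` equals
`(1/E) Σ_{k,l} (ξ_{l,k} v_k |V_{l,k}|² + ψ_{l,k} w |W_{l,k}|²)`. -/
theorem stmt14 (M K L : ℕ) (hM : 0 < M) (hK : 0 < K) (hL : 0 < L)
    (h : Fin L → Fin K → Fin M → ℂ)
    (W V : Fin L → Fin K → ℂ)
    (ξ ψ : Fin L → Fin K → ℝ) (v : Fin K → ℝ) (w β E : ℝ) (hE : 0 < E)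
    (pc : Fin M → ℂ) (p : Fin K → Fin M → ℂ)
    (hi : ∀ l k, ((ψ l k * w : ℝ) : ℂ) * star (∑ j, h l k j * pc j)
        = ((ψ l k * w : ℝ) : ℂ)
          * (((∑ i, ‖∑ j, h l k j * p i j‖ ^ 2)
              + ‖∑ j, h l k j * pc j‖ ^ 2 + 1 : ℝ) : ℂ) * W l k)
    (hii : ∀ l k, ((ξ l k * v k : ℝ) : ℂ) * star (∑ j, h l k j * p k j)
        = ((ξ l k * v k : ℝ) : ℂ)
          * (((∑ i, ‖∑ j, h l k j * p i j‖ ^ 2) + 1 : ℝ) : ℂ) * V l k)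
    (hiii : ∀ k, ∀ j,
        (∑ l, ((ξ l k * v k : ℝ) : ℂ) * star (V l k) * star (h l k j))
      = (∑ i, ∑ l, ((ξ l i * v i * ‖V l i‖ ^ 2 : ℝ) : ℂ)
            * ((∑ m, h l i m * p k m) * star (h l i j)))
        + (∑ i, ∑ l, ((ψ l i * w * ‖W l i‖ ^ 2 : ℝ) : ℂ)
            * ((∑ m, h l i m * p k m) * star (h l i j)))
        + (β : ℂ) * p k j)
    (hiv : ∀ j,
        (∑ k, ∑ l, ((ψ l k * w : ℝ) : ℂ) * star (W l k) * star (h l k j))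
      = (∑ k, ∑ l, ((ψ l k * w * ‖W l k‖ ^ 2 : ℝ) : ℂ)
            * ((∑ m, h l k m * pc m) * star (h l k j)))
        + (β : ℂ) * pc j)
    (hv : (∑ j, ‖pc j‖ ^ 2) + (∑ k, ∑ j, ‖p k j‖ ^ 2) = E) :
    β = (1 / E) * ∑ k, ∑ l, (ξ l k * v k * ‖V l k‖ ^ 2 + ψ l k * w * ‖W l k‖ ^ 2) := by
  classical
  -- per-(l,k) scalar consequences of hii
  have stepL : ∀ (k : Fin K) (l : Fin L),
      ((ξ l k * v k : ℝ) : ℂ) * star (V l k) * star (∑ j, h l k j * p k j)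
      = ((ξ l k * v k * ((∑ i, ‖∑ j, h l k j * p i j‖ ^ 2) + 1) * ‖V l k‖ ^ 2 : ℝ) : ℂ) := by
    intro k l
    have h2 := hii l k
    have h3 := mss (V l k)
    push_cast at h2 h3 ⊢
    linear_combination star (V l k) * h2
      + ((ξ l k : ℂ) * (v k : ℂ) * ((∑ i, (‖∑ j, h l k j * p i j‖ : ℂ) ^ 2) + 1)) * h3
  -- per-(l,k) scalar consequences of hi
  have stepLB : ∀ (k : Fin K) (l : Fin L),
      ((ψ l k * w : ℝ) : ℂ) * star (W l k) * star (∑ j, h l k j * pc j)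
      = ((ψ l k * w * ((∑ i, ‖∑ j, h l k j * p i j‖ ^ 2)
          + ‖∑ j, h l k j * pc j‖ ^ 2 + 1) * ‖W l k‖ ^ 2 : ℝ) : ℂ) := by
    intro k l
    have h2 := hi l k
    have h3 := mss (W l k)
    push_cast at h2 h3 ⊢
    linear_combination star (W l k) * h2
      + ((ψ l k : ℂ) * (w : ℂ) * ((∑ i, (‖∑ j, h l k j * p i j‖ : ℂ) ^ 2)
          + (‖∑ j, h l k j * pc j‖ : ℂ) ^ 2 + 1)) * h3
  -- complex equation from hiii (per k)
  have eA : ∀ k : Fin K,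
      (∑ l, ((ξ l k * v k * ((∑ i, ‖∑ j, h l k j * p i j‖ ^ 2) + 1) * ‖V l k‖ ^ 2 : ℝ) : ℂ))
      = (∑ i, ∑ l, ((ξ l i * v i * ‖V l i‖ ^ 2 : ℝ) : ℂ) * ((‖∑ m, h l i m * p k m‖ ^ 2 : ℝ) : ℂ))
      + (∑ i, ∑ l, ((ψ l i * w * ‖W l i‖ ^ 2 : ℝ) : ℂ) * ((‖∑ m, h l i m * p k m‖ ^ 2 : ℝ) : ℂ))
      + (β : ℂ) * ((∑ j, ‖p k j‖ ^ 2 : ℝ) : ℂ) := by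
    intro k
    have h0 : ∑ j, (∑ l, ((ξ l k * v k : ℝ) : ℂ) * star (V l k) * star (h l k j)) * star (p k j)
        = ∑ j, ((∑ i, ∑ l, ((ξ l i * v i * ‖V l i‖ ^ 2 : ℝ) : ℂ)
              * ((∑ m, h l i m * p k m) * star (h l i j)))
          + (∑ i, ∑ l, ((ψ l i * w * ‖W l i‖ ^ 2 : ℝ) : ℂ)
              * ((∑ m, h l i m * p k m) * star (h l i j)))
          + (β : ℂ) * p k j) * star (p k j) :=
      Finset.sum_congr rfl fun j _ => by rw [hiii k j]
    rw [helperA (fun l => ((ξ l k * v k : ℝ) : ℂ) * star (V l k)) (fun l j => h l k j) (p k)] at h0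
    simp only [add_mul, Finset.sum_add_distrib] at h0
    rw [helperC (fun i l => ((ξ l i * v i * ‖V l i‖ ^ 2 : ℝ) : ℂ)) (fun i l m => h l i m) (p k),
        helperC (fun i l => ((ψ l i * w * ‖W l i‖ ^ 2 : ℝ) : ℂ)) (fun i l m => h l i m) (p k),
        helperP (β : ℂ) (p k)] at h0
    calc ∑ l, ((ξ l k * v k * ((∑ i, ‖∑ j, h l k j * p i j‖ ^ 2) + 1) * ‖V l k‖ ^ 2 : ℝ) : ℂ)
        = ∑ l, ((ξ l k * v k : ℝ) : ℂ) * star (V l k) * star (∑ j, h l k j * p k j) :=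
          Finset.sum_congr rfl fun l _ => (stepL k l).symm
      _ = _ := h0
  -- complex equation from hiv
  have eB :
      (∑ k, ∑ l, ((ψ l k * w * ((∑ i, ‖∑ j, h l k j * p i j‖ ^ 2)
          + ‖∑ j, h l k j * pc j‖ ^ 2 + 1) * ‖W l k‖ ^ 2 : ℝ) : ℂ))
      = (∑ k, ∑ l, ((ψ l k * w * ‖W l k‖ ^ 2 : ℝ) : ℂ) * ((‖∑ m, h l k m * pc m‖ ^ 2 : ℝ) : ℂ))
      + (β : ℂ) * ((∑ j, ‖pc j‖ ^ 2 : ℝ) : ℂ) := by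
    have h0 : ∑ j, (∑ k, ∑ l, ((ψ l k * w : ℝ) : ℂ) * star (W l k) * star (h l k j)) * star (pc j)
        = ∑ j, ((∑ k, ∑ l, ((ψ l k * w * ‖W l k‖ ^ 2 : ℝ) : ℂ)
              * ((∑ m, h l k m * pc m) * star (h l k j)))
          + (β : ℂ) * pc j) * star (pc j) :=
      Finset.sum_congr rfl fun j _ => by rw [hiv j]
    rw [helperA2 (fun k l => ((ψ l k * w : ℝ) : ℂ) * star (W l k)) (fun k l j => h l k j) pc] at h0
    simp only [add_mul, Finset.sum_add_distrib] at h0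
    rw [helperC (fun k l => ((ψ l k * w * ‖W l k‖ ^ 2 : ℝ) : ℂ)) (fun k l m => h l k m) pc,
        helperP (β : ℂ) pc] at h0
    calc (∑ k, ∑ l, ((ψ l k * w * ((∑ i, ‖∑ j, h l k j * p i j‖ ^ 2)
            + ‖∑ j, h l k j * pc j‖ ^ 2 + 1) * ‖W l k‖ ^ 2 : ℝ) : ℂ))
        = ∑ k, ∑ l, ((ψ l k * w : ℝ) : ℂ) * star (W l k) * star (∑ j, h l k j * pc j) :=
          Finset.sum_congr rfl fun k _ => Finset.sum_congr rfl fun l _ => (stepLB k l).symm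
      _ = _ := h0
  -- real versions
  have realA : ∑ k, ∑ l, ξ l k * v k * ((∑ i, ‖∑ j, h l k j * p i j‖ ^ 2) + 1) * ‖V l k‖ ^ 2
      = (∑ k, ∑ i, ∑ l, ξ l i * v i * ‖V l i‖ ^ 2 * ‖∑ m, h l i m * p k m‖ ^ 2)
      + (∑ k, ∑ i, ∑ l, ψ l i * w * ‖W l i‖ ^ 2 * ‖∑ m, h l i m * p k m‖ ^ 2)
      + β * (∑ k, ∑ j, ‖p k j‖ ^ 2) := by
    have cA : ∑ k, (∑ l, ((ξ l k * v k * ((∑ i, ‖∑ j, h l k j * p i j‖ ^ 2) + 1) * ‖V l k‖ ^ 2 : ℝ) : ℂ))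
        = ∑ k, ((∑ i, ∑ l, ((ξ l i * v i * ‖V l i‖ ^ 2 : ℝ) : ℂ) * ((‖∑ m, h l i m * p k m‖ ^ 2 : ℝ) : ℂ))
          + (∑ i, ∑ l, ((ψ l i * w * ‖W l i‖ ^ 2 : ℝ) : ℂ) * ((‖∑ m, h l i m * p k m‖ ^ 2 : ℝ) : ℂ))
          + (β : ℂ) * ((∑ j, ‖p k j‖ ^ 2 : ℝ) : ℂ)) :=
      Finset.sum_congr rfl fun k _ => eA k
    simp only [Finset.sum_add_distrib, ← Finset.mul_sum] at cA
    apply Complex.ofReal_injective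
    push_cast at cA ⊢
    linear_combination cA
  have realB : ∑ k, ∑ l, ψ l k * w * ((∑ i, ‖∑ j, h l k j * p i j‖ ^ 2)
        + ‖∑ j, h l k j * pc j‖ ^ 2 + 1) * ‖W l k‖ ^ 2
      = (∑ k, ∑ l, ψ l k * w * ‖W l k‖ ^ 2 * ‖∑ m, h l k m * pc m‖ ^ 2)
      + β * (∑ j, ‖pc j‖ ^ 2) := by
    apply Complex.ofReal_injective
    push_cast at eB ⊢
    linear_combination eB
  -- expansion lemmas (real)
  have expandA : ∑ k, ∑ l, ξ l k * v k * ((∑ i, ‖∑ j, h l k j * p i j‖ ^ 2) + 1) * ‖V l k‖ ^ 2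
      = (∑ k, ∑ l, ξ l k * v k * ‖V l k‖ ^ 2 * (∑ i, ‖∑ j, h l k j * p i j‖ ^ 2))
      + (∑ k, ∑ l, ξ l k * v k * ‖V l k‖ ^ 2) := by
    rw [← Finset.sum_add_distrib]
    refine Finset.sum_congr rfl fun k _ => ?_
    rw [← Finset.sum_add_distrib]
    exact Finset.sum_congr rfl fun l _ => by ring
  have expandB : ∑ k, ∑ l, ψ l k * w * ((∑ i, ‖∑ j, h l k j * p i j‖ ^ 2)
        + ‖∑ j, h l k j * pc j‖ ^ 2 + 1) * ‖W l k‖ ^ 2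
      = (∑ k, ∑ l, ψ l k * w * ‖W l k‖ ^ 2 * (∑ i, ‖∑ j, h l k j * p i j‖ ^ 2))
      + (∑ k, ∑ l, ψ l k * w * ‖W l k‖ ^ 2 * ‖∑ m, h l k m * pc m‖ ^ 2)
      + (∑ k, ∑ l, ψ l k * w * ‖W l k‖ ^ 2) := by
    rw [← Finset.sum_add_distrib, ← Finset.sum_add_distrib]
    refine Finset.sum_congr rfl fun k _ => ?_
    rw [← Finset.sum_add_distrib, ← Finset.sum_add_distrib]
    exact Finset.sum_congr rfl fun l _ => by ring
  have swapV : ∑ k, ∑ i, ∑ l, ξ l i * v i * ‖V l i‖ ^ 2 * ‖∑ m, h l i m * p k m‖ ^ 2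
      = ∑ k, ∑ l, ξ l k * v k * ‖V l k‖ ^ 2 * (∑ i, ‖∑ j, h l k j * p i j‖ ^ 2) := by
    rw [Finset.sum_comm]
    refine Finset.sum_congr rfl fun i _ => ?_
    rw [Finset.sum_comm]
    exact Finset.sum_congr rfl fun l _ => by rw [Finset.mul_sum]
  have swapW : ∑ k, ∑ i, ∑ l, ψ l i * w * ‖W l i‖ ^ 2 * ‖∑ m, h l i m * p k m‖ ^ 2
      = ∑ k, ∑ l, ψ l k * w * ‖W l k‖ ^ 2 * (∑ i, ‖∑ j, h l k j * p i j‖ ^ 2) := by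
    rw [Finset.sum_comm]
    refine Finset.sum_congr rfl fun i _ => ?_
    rw [Finset.sum_comm]
    exact Finset.sum_congr rfl fun l _ => by rw [Finset.mul_sum]
  have expandT : ∑ k, ∑ l, (ξ l k * v k * ‖V l k‖ ^ 2 + ψ l k * w * ‖W l k‖ ^ 2)
      = (∑ k, ∑ l, ξ l k * v k * ‖V l k‖ ^ 2) + (∑ k, ∑ l, ψ l k * w * ‖W l k‖ ^ 2) := by
    rw [← Finset.sum_add_distrib]
    exact Finset.sum_congr rfl fun k _ => Finset.sum_add_distrib
  have main : β * E = ∑ k, ∑ l, (ξ l k * v k * ‖V l k‖ ^ 2 + ψ l k * w * ‖W l k‖ ^ 2) := by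
    rw [expandT]
    linear_combination (expandA - realA) - swapV - swapW + (expandB - realB) - β * hv
  have hE' : E ≠ 0 := ne_of_gt hE
  rw [← main]
  field_simp
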